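/- Suppose $\alpha(u):=\#\{j: 1/p_j\le u\}$ is regularly varying at $\infty$ of order $\gamma\in(0,1)$. Let $\sigma_n\to\sigma\in(0,1)$, let $M_{n,j}\sim\mathrm{Binomial}(n,p_j)$ be independent over $j$, and let $k_n\ge n$ with $k_n-n=O(\sqrt n)$. Then (a) $\sum_{j=1}^\infty \mathbb{E}\bigl(1_{M_{k_n,j}\ge 1}-1_{M_{n,j}\ge 1}\bigr)=o\bigl(\alpha(n)^{1/2}\bigr)$. (b) If moreover there exists a continuously differentiable function $L:[1,\infty)\to\mathbb{R}$ with $|\alpha(u)-u^\gamma L(u)|\le C u^\beta$ for every $u>1$, some $C>0$ and $\beta<\gamma$, and $|L'(u)|\le C_\delta u^{-1+\delta}$ for every $u>1$, every $\delta>0$ and some $C_\delta>0$, then $\sum_{j=1}^\infty \mathbb{E}\bigl(g_{\sigma_n}(M_{k_n,j})-g_{\sigma_n}(M_{n,j})\bigr)=o\bigl(\alpha(n)^{1/2}\bigr)$. -/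

import Mathlib

open Filter Topology Real Set

noncomputable section

/-- `α(u) = #{j : 1/p_j ≤ u}`, as a real number. -/
def alpha0 (p : ℕ → ℝ) (u : ℝ) : ℝ := (Nat.card {j : ℕ | 1 / p j ≤ u} : ℝ)

/-- A function `α` is regularly varying at `∞` of order `γ` if `α(nu)/α(n) → u^γ` for all `u>0`. -/
def RegularlyVarying (α : ℝ → ℝ) (γ : ℝ) : Prop :=
  ∀ u : ℝ, 0 < u → Tendsto (fun n : ℕ => α ((n : ℝ) * u) / α (n : ℝ)) atTop (𝓝 (u ^ γ))

/-- `g_σ(m) = ∑_{l=1}^{m-1} 1/(l-σ)` (with `g_σ(0) = g_σ(1) = 0`). -/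
def gfun (σ : ℝ) (m : ℕ) : ℝ := ∑ l ∈ Finset.Icc 1 (m - 1), (1 : ℝ) / ((l : ℝ) - σ)

/-- Expectation of `g(M)` for `M ∼ Poisson(lam)`. -/
def Epois (lam : ℝ) (g : ℕ → ℝ) : ℝ :=
  ∑' m : ℕ, g m * (Real.exp (-lam) * lam ^ m / (Nat.factorial m : ℝ))

/-- Expectation of `g(M)` for `M ∼ Binomial(n, q)`. -/
def Ebin (n : ℕ) (q : ℝ) (g : ℕ → ℝ) : ℝ :=
  ∑ m ∈ Finset.range (n + 1),
    g m * ((n.choose m : ℝ) * q ^ m * (1 - q) ^ (n - m))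

lemma finite_setOf_inv_le (p : ℕ → ℝ) (hp : ∀ j, 0 < p j) (hps : Summable p) (u : ℝ) :
    {j : ℕ | 1 / p j ≤ u}.Finite := by
  rcases le_or_gt u 0 with hu | hu
  · convert Set.finite_empty
    ext j; simp only [Set.mem_setOf_eq, Set.mem_empty_iff_false, iff_false, not_le]
    exact lt_of_le_of_lt hu (one_div_pos.mpr (hp j))
  · have h0 : ∀ᶠ j in Filter.cofinite, p j < 1 / u := by
      rw [Nat.cofinite_eq_atTop]
      exact (hps.tendsto_atTop_zero).eventually_lt_const (by positivity)
    have hfin : {j : ℕ | ¬ p j < 1 / u}.Finite := h0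
    refine hfin.subset ?_
    intro j hj
    simp only [Set.mem_setOf_eq, not_lt] at *
    rw [div_le_iff₀ (hp j)] at hj
    rw [div_le_iff₀ hu]
    nlinarith [hp j]

lemma alpha0_nonneg (p : ℕ → ℝ) (u : ℝ) : 0 ≤ alpha0 p u := Nat.cast_nonneg _

lemma alpha0_mono (p : ℕ → ℝ) (hp : ∀ j, 0 < p j) (hps : Summable p) {u v : ℝ} (huv : u ≤ v) :
    alpha0 p u ≤ alpha0 p v := by
  have := Nat.card_mono (finite_setOf_inv_le p hp hps v)
    (fun j hj => le_trans hj huv : {j : ℕ | 1 / p j ≤ u} ⊆ {j : ℕ | 1 / p j ≤ v})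
  unfold alpha0
  exact_mod_cast this

lemma card_filter_le_alpha0 (p : ℕ → ℝ) (hp : ∀ j, 0 < p j) (hps : Summable p)
    (F : Finset ℕ) (u : ℝ) (hF : ∀ j ∈ F, 1 / p j ≤ u) :
    (F.card : ℝ) ≤ alpha0 p u := by
  have hfin := finite_setOf_inv_le p hp hps u
  have hsub : F ⊆ hfin.toFinset := by
    intro j hj; simp only [Set.Finite.mem_toFinset, Set.mem_setOf_eq]; exact hF j hj
  have h1 : F.card ≤ hfin.toFinset.card := Finset.card_le_card hsub
  have h2 : Nat.card {j : ℕ | 1 / p j ≤ u} = hfin.toFinset.card := by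
    rw [Nat.card_eq_card_finite_toFinset]
  unfold alpha0
  rw [h2]
  exact_mod_cast h1

lemma one_le_alpha0 (p : ℕ → ℝ) (hp : ∀ j, 0 < p j) (hps : Summable p)
    {u : ℝ} (hu : 1 / p 0 ≤ u) : 1 ≤ alpha0 p u := by
  have := card_filter_le_alpha0 p hp hps {0} u (by simpa using hu)
  simpa using this


lemma alpha0_chain_upper (p : ℕ → ℝ) (n0 : ℕ) (B : ℝ)
    (hd : ∀ n : ℕ, n0 ≤ n → alpha0 p ((2 * n : ℕ) : ℝ) ≤ B * alpha0 p (n : ℝ))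
    (hB : 0 ≤ B) (hn0 : 1 ≤ n0) :
    ∀ k : ℕ, alpha0 p ((2 ^ k * n0 : ℕ) : ℝ) ≤ B ^ k * alpha0 p (n0 : ℝ) := by
  intro k
  induction k with
  | zero => simp
  | succ k ih =>
    have h1 : n0 ≤ 2 ^ k * n0 := Nat.le_mul_of_pos_left n0 (by positivity)
    have h2 := hd (2 ^ k * n0) h1
    have h3 : (2 * (2 ^ k * n0) : ℕ) = (2 ^ (k + 1) * n0 : ℕ) := by ring
    rw [h3] at h2
    calc alpha0 p ((2 ^ (k+1) * n0 : ℕ) : ℝ) ≤ B * alpha0 p ((2 ^ k * n0 : ℕ) : ℝ) := h2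
    _ ≤ B * (B ^ k * alpha0 p (n0 : ℝ)) := by nlinarith [ih]
    _ = B ^ (k+1) * alpha0 p (n0 : ℝ) := by ring


lemma alpha0_upper (p : ℕ → ℝ) (hmono : ∀ {u v : ℝ}, u ≤ v → alpha0 p u ≤ alpha0 p v)
    (n0 : ℕ) (hn0 : 1 ≤ n0) (b : ℝ) (hb : 0 ≤ b)
    (hchain : ∀ k : ℕ, alpha0 p ((2 ^ k * n0 : ℕ) : ℝ) ≤ ((2:ℝ) ^ b) ^ k * alpha0 p (n0 : ℝ)) :
    ∀ u : ℝ, 1 ≤ u → alpha0 p u ≤ ((2:ℝ) ^ b * alpha0 p (n0 : ℝ)) * u ^ b := by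
  have hα0 : 0 ≤ alpha0 p (n0 : ℝ) := Nat.cast_nonneg _
  have h2b : (1:ℝ) ≤ (2:ℝ) ^ b := Real.one_le_rpow one_le_two hb
  have key : ∀ k : ℕ, ∀ u : ℝ, 1 ≤ u → u ≤ ((2 ^ k * n0 : ℕ) : ℝ) →
      alpha0 p u ≤ ((2:ℝ) ^ b * alpha0 p (n0 : ℝ)) * u ^ b := by
    intro k
    induction k with
    | zero =>
      intro u hu1 hule
      simp only [pow_zero, one_mul] at hule
      have h1 : alpha0 p u ≤ alpha0 p (n0 : ℝ) := hmono hule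
      have h2 : (1:ℝ) ≤ u ^ b := Real.one_le_rpow hu1 hb
      have h3 : (1:ℝ) ≤ (2:ℝ) ^ b * u ^ b := by nlinarith
      calc alpha0 p u ≤ alpha0 p (n0 : ℝ) := h1
      _ = alpha0 p (n0 : ℝ) * 1 := by ring
      _ ≤ alpha0 p (n0 : ℝ) * ((2:ℝ) ^ b * u ^ b) := by
          exact mul_le_mul_of_nonneg_left h3 hα0
      _ = ((2:ℝ) ^ b * alpha0 p (n0 : ℝ)) * u ^ b := by ring
    | succ k ih =>
      intro u hu1 hule
      rcases le_or_gt u ((2 ^ k * n0 : ℕ) : ℝ) with h | h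
      · exact ih u hu1 h
      · have h1 : alpha0 p u ≤ alpha0 p ((2 ^ (k+1) * n0 : ℕ) : ℝ) := hmono hule
        have h2 := hchain (k+1)
        have h3 : ((2:ℝ) ^ b) ^ (k+1) = (2:ℝ) ^ b * ((2:ℝ) ^ b) ^ k := by ring
        have h4 : ((2:ℝ) ^ b) ^ k = ((2:ℝ) ^ k) ^ b := by
          rw [← Real.rpow_natCast ((2:ℝ) ^ b) k, ← Real.rpow_mul (by norm_num),
            mul_comm b (k:ℝ), Real.rpow_mul (by norm_num), Real.rpow_natCast]
        have h5 : ((2:ℝ) ^ k) ≤ u := by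
          have : ((2 ^ k * n0 : ℕ) : ℝ) ≥ (2:ℝ) ^ k := by
            push_cast
            nlinarith [pow_pos (by norm_num : (0:ℝ) < 2) k,
              (by exact_mod_cast hn0 : (1:ℝ) ≤ (n0:ℝ))]
          linarith
        have h6 : ((2:ℝ) ^ k) ^ b ≤ u ^ b :=
          Real.rpow_le_rpow (by positivity) h5 hb
        calc alpha0 p u ≤ ((2:ℝ) ^ b) ^ (k+1) * alpha0 p (n0 : ℝ) := le_trans h1 h2
        _ = (2:ℝ) ^ b * alpha0 p (n0 : ℝ) * ((2:ℝ) ^ k) ^ b := by rw [h3, h4]; ring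
        _ ≤ ((2:ℝ) ^ b * alpha0 p (n0 : ℝ)) * u ^ b := by
            exact mul_le_mul_of_nonneg_left h6 (by positivity)
  intro u hu
  obtain ⟨kk, hkk⟩ := pow_unbounded_of_one_lt (R := ℝ) u one_lt_two
  refine key kk u hu ?_
  push_cast
  nlinarith [(by exact_mod_cast hn0 : (1:ℝ) ≤ (n0:ℝ)), pow_pos (by norm_num : (0:ℝ) < 2) kk]


lemma alpha0_lower (p : ℕ → ℝ) (hmono : ∀ {u v : ℝ}, u ≤ v → alpha0 p u ≤ alpha0 p v)
    (n0 : ℕ) (hn0 : 1 ≤ n0) (a : ℝ) (ha : 0 ≤ a) (hone : 1 ≤ alpha0 p (n0 : ℝ))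
    (hchain : ∀ k : ℕ, ((2:ℝ) ^ a) ^ k * alpha0 p (n0 : ℝ) ≤ alpha0 p ((2 ^ k * n0 : ℕ) : ℝ)) :
    ∀ n : ℕ, n0 ≤ n → ((2 * n0 : ℝ)) ^ (-a) * (n : ℝ) ^ a ≤ alpha0 p (n : ℝ) := by
  intro n hn
  have hn0pos : 0 < n0 := hn0
  have hq1 : 1 ≤ n / n0 := (Nat.one_le_div_iff hn0pos).mpr hn
  set kk := Nat.log 2 (n / n0) with hkk
  have h2k : 2 ^ kk ≤ n / n0 := Nat.pow_log_le_self 2 (by omega)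
  have hlow : 2 ^ kk * n0 ≤ n := le_trans (Nat.mul_le_mul_right n0 h2k) (Nat.div_mul_le_self n n0)
  have hup : n / n0 < 2 ^ (kk + 1) := Nat.lt_pow_succ_log_self (by norm_num) _
  have hupn : n < 2 ^ (kk + 1) * n0 := by
    have := Nat.div_add_mod n n0
    have hmod : n % n0 < n0 := Nat.mod_lt n hn0pos
    nlinarith [Nat.mul_le_mul_right n0 (Nat.succ_le_of_lt hup)]
  -- real versions
  have hr1 : alpha0 p (n : ℝ) ≥ ((2:ℝ) ^ a) ^ kk := by
    calc ((2:ℝ) ^ a) ^ kk = ((2:ℝ) ^ a) ^ kk * 1 := by ring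
    _ ≤ ((2:ℝ) ^ a) ^ kk * alpha0 p (n0 : ℝ) := by
        have : (0:ℝ) ≤ ((2:ℝ) ^ a) ^ kk := by positivity
        nlinarith
    _ ≤ alpha0 p ((2 ^ kk * n0 : ℕ) : ℝ) := hchain kk
    _ ≤ alpha0 p (n : ℝ) := hmono (by exact_mod_cast hlow)
  have h4 : ((2:ℝ) ^ a) ^ kk = ((2:ℝ) ^ kk) ^ a := by
    rw [← Real.rpow_natCast ((2:ℝ) ^ a) kk, ← Real.rpow_mul (by norm_num),
      mul_comm a (kk:ℝ), Real.rpow_mul (by norm_num), Real.rpow_natCast]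
  have h5 : (n : ℝ) / (2 * n0) ≤ (2:ℝ) ^ kk := by
    have h6 : (n : ℝ) < 2 ^ (kk + 1) * n0 := by exact_mod_cast hupn
    rw [div_le_iff₀ (by positivity)]
    rw [pow_succ] at h6
    nlinarith
  have h7 : ((n : ℝ) / (2 * n0)) ^ a ≤ ((2:ℝ) ^ kk) ^ a :=
    Real.rpow_le_rpow (by positivity) h5 ha
  have h8 : ((n : ℝ) / (2 * n0)) ^ a = (2 * n0 : ℝ) ^ (-a) * (n : ℝ) ^ a := by
    rw [Real.div_rpow (by positivity) (by positivity), Real.rpow_neg (by positivity)]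
    ring
  rw [← h8]
  calc ((n : ℝ) / (2 * n0)) ^ a ≤ ((2:ℝ) ^ kk) ^ a := h7
  _ = ((2:ℝ) ^ a) ^ kk := h4.symm
  _ ≤ alpha0 p (n : ℝ) := hr1


lemma summable_rpow_of_count (p : ℕ → ℝ) (hp : ∀ j, 0 < p j) (hple : ∀ j, p j ≤ 1)
    (C b θ : ℝ) (hb : 0 ≤ b) (hbθ : b < θ) (hC : 0 ≤ C)
    (hcard : ∀ (F : Finset ℕ) (u : ℝ), (∀ j ∈ F, 1 / p j ≤ u) → (F.card : ℝ) ≤ alpha0 p u)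
    (hcount : ∀ u : ℝ, 1 ≤ u → alpha0 p u ≤ C * u ^ b) :
    Summable (fun j => p j ^ θ) ∧
      ∑' j, p j ^ θ ≤ C * (2:ℝ) ^ b * (1 - (2:ℝ) ^ (b - θ))⁻¹ := by
  have hθ : 0 ≤ θ := le_trans hb hbθ.le
  have h2 : (0:ℝ) < 2 := two_pos
  set x : ℝ := (2:ℝ) ^ (b - θ) with hxdef
  have hx0 : 0 < x := Real.rpow_pos_of_pos (by norm_num) _
  have hx1 : x < 1 := by
    rw [hxdef]
    have : (2:ℝ) ^ (b - θ) < (2:ℝ) ^ (0:ℝ) :=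
      Real.rpow_lt_rpow_of_exponent_lt (by norm_num) (by linarith)
    simpa using this
  set g : ℕ → ℕ := fun j => Nat.log 2 ⌊1 / p j⌋₊ with hgdef
  have hv1 : ∀ j, 1 ≤ 1 / p j := fun j => (le_div_iff₀ (hp j)).mpr (by linarith [hple j])
  have hfl1 : ∀ j, 1 ≤ ⌊1 / p j⌋₊ := fun j => Nat.le_floor (by exact_mod_cast hv1 j)
  have hpub : ∀ j, p j ≤ ((2:ℝ) ^ (g j))⁻¹ := by
    intro j
    have h1 : ((2:ℕ) ^ (g j) : ℝ) ≤ ⌊1 / p j⌋₊ := by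
      exact_mod_cast Nat.pow_log_le_self 2 (Nat.one_le_iff_ne_zero.mp (hfl1 j))
    have h2' : (⌊1 / p j⌋₊ : ℝ) ≤ 1 / p j := Nat.floor_le (le_of_lt (one_div_pos.mpr (hp j)))
    have h3 : ((2:ℝ) ^ (g j)) ≤ 1 / p j := by push_cast at h1; linarith
    have h4 : (2:ℝ) ^ (g j) * p j ≤ 1 := (le_div_iff₀ (hp j)).mp h3
    rw [inv_eq_one_div, le_div_iff₀ (by positivity)]
    rw [mul_comm]; exact h4
  have hvub : ∀ j, 1 / p j ≤ (2:ℝ) ^ (g j + 1) := by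
    intro j
    have h1 : (1:ℝ) / p j < ⌊1 / p j⌋₊ + 1 := Nat.lt_floor_add_one _
    have hh2 : ⌊1 / p j⌋₊ < 2 ^ (g j + 1) := Nat.lt_pow_succ_log_self (by norm_num) _
    have h3 : (⌊1 / p j⌋₊ : ℝ) + 1 ≤ ((2:ℕ) ^ (g j + 1) : ℝ) := by
      exact_mod_cast Nat.succ_le_of_lt hh2
    push_cast at h3
    linarith
  have hterm : ∀ j, p j ^ θ ≤ ((2:ℝ) ^ (g j))⁻¹ ^ θ := fun j =>
    Real.rpow_le_rpow (hp j).le (hpub j) hθ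
  have hkey : ∀ i : ℕ, ((2:ℝ) ^ (i + 1)) ^ b * ((2:ℝ) ^ i)⁻¹ ^ θ = (2:ℝ) ^ b * x ^ i := by
    intro i
    have e1 : ((2:ℝ) ^ (i + 1) : ℝ) ^ b = (2:ℝ) ^ (((i:ℝ) + 1) * b) := by
      rw [← Real.rpow_natCast (2:ℝ) (i+1), ← Real.rpow_mul h2.le]
      congr 1
      push_cast; ring
    have e2 : ((2:ℝ) ^ i)⁻¹ ^ θ = (2:ℝ) ^ (-(i:ℝ) * θ) := by
      rw [← Real.rpow_natCast (2:ℝ) i, ← Real.rpow_neg h2.le, ← Real.rpow_mul h2.le]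
    have e3 : x ^ i = (2:ℝ) ^ ((b - θ) * (i:ℝ)) := by
      rw [hxdef, ← Real.rpow_natCast ((2:ℝ)^(b-θ)) i, ← Real.rpow_mul h2.le]
    rw [e1, e2, e3, ← Real.rpow_add h2, ← Real.rpow_add h2]
    ring_nf
  have hfib : ∀ i : ℕ, ∀ F : Finset ℕ, (∀ j ∈ F, g j = i) →
      ∑ j ∈ F, p j ^ θ ≤ C * ((2:ℝ) ^ b * x ^ i) := by
    intro i F hF
    have hcard2 : (F.card : ℝ) ≤ alpha0 p ((2:ℝ) ^ (i + 1)) := by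
      apply hcard
      intro j hj
      rw [← hF j hj]
      exact hvub j
    have hcount2 : alpha0 p ((2:ℝ) ^ (i + 1)) ≤ C * ((2:ℝ) ^ (i + 1)) ^ b :=
      hcount _ (one_le_pow₀ (by norm_num))
    have hinvnn : (0:ℝ) ≤ ((2:ℝ) ^ i)⁻¹ ^ θ := Real.rpow_nonneg (by positivity) _
    calc ∑ j ∈ F, p j ^ θ ≤ ∑ j ∈ F, ((2:ℝ) ^ i)⁻¹ ^ θ := by
          apply Finset.sum_le_sum
          intro j hj
          have := hterm j
          rwa [hF j hj] at this
    _ = (F.card : ℝ) * ((2:ℝ) ^ i)⁻¹ ^ θ := by rw [Finset.sum_const, nsmul_eq_mul]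
    _ ≤ C * ((2:ℝ) ^ (i + 1)) ^ b * ((2:ℝ) ^ i)⁻¹ ^ θ := by
        apply mul_le_mul_of_nonneg_right (le_trans hcard2 hcount2) hinvnn
    _ = C * (((2:ℝ) ^ (i + 1)) ^ b * ((2:ℝ) ^ i)⁻¹ ^ θ) := by ring
    _ = C * ((2:ℝ) ^ b * x ^ i) := by rw [hkey i]
  have hgeo : Summable (fun i : ℕ => x ^ i) := summable_geometric_of_lt_one hx0.le hx1
  have hgeosum : ∑' i : ℕ, x ^ i = (1 - x)⁻¹ := tsum_geometric_of_lt_one hx0.le hx1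
  have hpartial : ∀ N : ℕ, ∑ j ∈ Finset.range N, p j ^ θ ≤ C * (2:ℝ) ^ b * (1 - x)⁻¹ := by
    intro N
    set M : ℕ := (Finset.range N).sup g with hM
    have hmaps : ∀ j ∈ Finset.range N, g j ∈ Finset.range (M + 1) := by
      intro j hj
      exact Finset.mem_range.mpr (Nat.lt_succ_of_le (Finset.le_sup hj))
    have heq := Finset.sum_fiberwise_of_maps_to hmaps (fun j => p j ^ θ)
    rw [← heq]
    calc ∑ i ∈ Finset.range (M+1), ∑ j ∈ (Finset.range N).filter (fun j => g j = i), p j ^ θ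
        ≤ ∑ i ∈ Finset.range (M+1), C * ((2:ℝ) ^ b * x ^ i) := by
          apply Finset.sum_le_sum
          intro i _
          exact hfib i _ (fun j hj => (Finset.mem_filter.mp hj).2)
    _ = C * (2:ℝ) ^ b * ∑ i ∈ Finset.range (M+1), x ^ i := by
        rw [Finset.mul_sum]; apply Finset.sum_congr rfl; intros; ring
    _ ≤ C * (2:ℝ) ^ b * (1 - x)⁻¹ := by
        apply mul_le_mul_of_nonneg_left _ (by positivity)
        rw [← hgeosum]
        exact hgeo.sum_le_tsum _ (fun i _ => by positivity)
  have hnn : ∀ j, 0 ≤ p j ^ θ := fun j => Real.rpow_nonneg (hp j).le _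
  exact ⟨summable_of_sum_range_le hnn hpartial,
    Real.tsum_le_of_sum_range_le hnn hpartial⟩


lemma min_mix (z q w θ : ℝ) (hq : 0 < q) (hw : 0 < w) (hθ0 : 0 ≤ θ) (hθ1 : θ ≤ 1)
    (h1 : z ≤ q) (h2 : z ≤ w) (hz : 0 ≤ z) : z ≤ q ^ θ * w ^ (1 - θ) := by
  have hm : z = z ^ θ * z ^ (1 - θ) := by
    rcases eq_or_lt_of_le hz with h | h
    · rcases eq_or_lt_of_le hθ0 with h0 | h0
      · simp [← h, ← h0]
      · rw [← h, Real.zero_rpow (by linarith)]; ring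
    · rw [← Real.rpow_add h, add_sub_cancel, Real.rpow_one]
  rw [hm]
  have a1 : z ^ θ ≤ q ^ θ := Real.rpow_le_rpow hz h1 hθ0
  have a2 : z ^ (1-θ) ≤ w ^ (1-θ) := Real.rpow_le_rpow hz h2 (by linarith)
  have b1 : (0:ℝ) ≤ z ^ θ := Real.rpow_nonneg hz _
  have b2 : (0:ℝ) ≤ z ^ (1-θ) := Real.rpow_nonneg hz _
  nlinarith [Real.rpow_nonneg (le_of_lt hq) θ]

lemma qpow_bound (q : ℝ) (n : ℕ) (θ : ℝ) (hq0 : 0 < q) (hq1 : q ≤ 1) (hn : 1 ≤ n)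
    (hθ0 : 0 ≤ θ) (hθ1 : θ ≤ 1) : q * (1-q) ^ n ≤ (n:ℝ) ^ (θ-1) * q ^ θ := by
  have hnR : (1:ℝ) ≤ (n:ℝ) := by exact_mod_cast hn
  have hnpos : (0:ℝ) < n := by linarith
  have c1 : q * (1-q) ^ n ≤ q := by
    nlinarith [pow_le_one₀ (by linarith : (0:ℝ) ≤ 1-q) (by linarith : (1:ℝ)-q ≤ 1) (n := n),
      pow_nonneg (by linarith : (0:ℝ) ≤ 1-q) n]
  have c2 : q * (1-q) ^ n ≤ 1 / (n:ℝ) := by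
    have hb : 1 + (n:ℝ) * q ≤ (1+q) ^ n := one_add_mul_le_pow (by linarith) n
    have hmain : (1 + (n:ℝ)*q) * (1-q)^n ≤ 1 := by
      have e1 : (1+q)^n * (1-q)^n = ((1+q)*(1-q))^n := (mul_pow _ _ _).symm
      have e2 : ((1+q)*(1-q)) ^ n ≤ 1 := by
        apply pow_le_one₀ (by nlinarith) (by nlinarith)
      have e3 : (0:ℝ) ≤ (1-q)^n := pow_nonneg (by linarith) n
      nlinarith
    rw [le_div_iff₀ hnpos]
    have e4 : (0:ℝ) ≤ (1-q)^n := pow_nonneg (by linarith) n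
    nlinarith
  have hmix := min_mix (q * (1-q)^n) q (1/(n:ℝ)) θ hq0 (by positivity) hθ0 hθ1 c1 c2
    (mul_nonneg hq0.le (pow_nonneg (by linarith) n))
  have e5 : (1/(n:ℝ)) ^ (1-θ) = (n:ℝ) ^ (θ-1) := by
    rw [one_div, ← Real.rpow_neg_one (n:ℝ), ← Real.rpow_mul hnpos.le]
    congr 1; ring
  rw [e5] at hmix
  linarith [hmix]


lemma binom_sum_one (n : ℕ) (q : ℝ) :
    ∑ m ∈ Finset.range (n+1), (n.choose m : ℝ) * q ^ m * (1-q) ^ (n-m) = 1 := by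
  have h := add_pow q (1-q) n
  simp only [add_sub_cancel, one_pow] at h
  calc ∑ m ∈ Finset.range (n+1), (n.choose m : ℝ) * q ^ m * (1-q) ^ (n-m)
      = ∑ m ∈ Finset.range (n+1), q ^ m * (1-q) ^ (n-m) * (n.choose m : ℝ) := by
        apply Finset.sum_congr rfl; intro m _; ring
  _ = 1 := h.symm

lemma Ebin_succ_sub (n : ℕ) (q : ℝ) (g : ℕ → ℝ) :
    Ebin (n+1) q g - Ebin n q g
      = q * ∑ m ∈ Finset.range (n+1),
          (g (m+1) - g m) * ((n.choose m : ℝ) * q ^ m * (1-q) ^ (n-m)) := by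
  have hS2 : ∑ m ∈ Finset.range (n+1),
        g (m+1) * ((n.choose (m+1) : ℝ) * q ^ (m+1) * (1-q) ^ (n-m))
      = (1-q) * (Ebin n q g - g 0 * (1-q) ^ n) := by
    rw [Finset.sum_range_succ]
    have hz : (n.choose (n+1) : ℝ) = 0 := by
      rw [Nat.choose_eq_zero_of_lt (Nat.lt_succ_self n)]; norm_num
    rw [hz]
    have hE : Ebin n q g
        = (∑ m ∈ Finset.range n,
            g (m+1) * ((n.choose (m+1):ℝ) * q^(m+1) * (1-q)^(n-(m+1))))
          + g 0 * ((n.choose 0 : ℝ) * q^0 * (1-q)^(n-0)) := Finset.sum_range_succ' _ n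
    rw [hE]
    simp only [Nat.choose_zero_right, Nat.cast_one, pow_zero, Nat.sub_zero, one_mul, mul_one]
    rw [mul_sub, mul_add]
    have : (1-q) * (g 0 * (1-q)^n) = g 0 * (1-q)^n * (1-q) := by ring
    rw [Finset.mul_sum]
    have hcongr : ∀ m ∈ Finset.range n,
        g (m+1) * ((n.choose (m+1) : ℝ) * q ^ (m+1) * (1-q) ^ (n-m))
        = (1-q) * (g (m+1) * ((n.choose (m+1):ℝ) * q^(m+1) * (1-q)^(n-(m+1)))) := by
      intro m hm
      have hmn : m < n := Finset.mem_range.mp hm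
      have hnm : n - m = (n - (m+1)) + 1 := by omega
      rw [hnm, pow_succ]
      ring
    rw [Finset.sum_congr rfl hcongr]
    ring
  have hE1 : Ebin (n+1) q g
      = (∑ m ∈ Finset.range (n+1),
          g (m+1) * (((n+1).choose (m+1) : ℝ) * q^(m+1) * (1-q)^((n+1)-(m+1))))
        + g 0 * (((n+1).choose 0 : ℝ) * q^0 * (1-q)^((n+1)-0)) := Finset.sum_range_succ' _ (n+1)
  have hsplit : ∀ m : ℕ, (((n+1).choose (m+1) : ℝ) : ℝ) = (n.choose m : ℝ) + (n.choose (m+1) : ℝ) := by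
    intro m
    rw [Nat.choose_succ_succ]
    push_cast; ring
  have hE2 : Ebin (n+1) q g
      = (∑ m ∈ Finset.range (n+1),
          (g (m+1) * ((n.choose m : ℝ) * q^(m+1) * (1-q)^(n-m))
           + g (m+1) * ((n.choose (m+1) : ℝ) * q^(m+1) * (1-q)^(n-m))))
        + g 0 * (1-q)^(n+1) := by
    rw [hE1]
    simp only [Nat.choose_zero_right, Nat.cast_one, pow_zero, Nat.sub_zero, one_mul, mul_one,
      Nat.succ_sub_succ]
    congr 1
    apply Finset.sum_congr rfl
    intro m hm
    rw [hsplit m]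
    ring
  rw [hE2, Finset.sum_add_distrib, hS2]
  have hq : q * ∑ m ∈ Finset.range (n+1),
      (g (m+1) - g m) * ((n.choose m : ℝ) * q ^ m * (1-q) ^ (n-m))
      = (∑ m ∈ Finset.range (n+1), g (m+1) * ((n.choose m : ℝ) * q^(m+1) * (1-q)^(n-m)))
        - q * Ebin n q g := by
    unfold Ebin
    rw [Finset.mul_sum, Finset.mul_sum, ← Finset.sum_sub_distrib]
    apply Finset.sum_congr rfl
    intro m hm
    rw [pow_succ]
    ring
  rw [hq]
  ring


lemma gfun_zero (σ : ℝ) : gfun σ 0 = 0 := by simp [gfun]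
lemma gfun_one (σ : ℝ) : gfun σ 1 = 0 := by simp [gfun]

lemma gfun_succ_sub (σ : ℝ) (m : ℕ) (hm : 1 ≤ m) :
    gfun σ (m+1) - gfun σ m = 1 / ((m:ℝ) - σ) := by
  unfold gfun
  have h1 : m + 1 - 1 = m := by omega
  rw [h1]
  obtain ⟨m', rfl⟩ : ∃ m', m = m' + 1 := ⟨m - 1, by omega⟩
  rw [Finset.sum_Icc_succ_top (by omega : 1 ≤ m' + 1)]
  simp


lemma mix2 (z q : ℝ) (n : ℕ) (c θ : ℝ) (hc : 0 < c) (hn : 1 ≤ n) (hq0 : 0 < q) (hq1 : q ≤ 1)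
    (hθ0 : 0 ≤ θ) (hθ1 : θ ≤ 1) (h1 : z ≤ c * ((n:ℝ) * q^2)) (h2 : z ≤ 2*c/(n:ℝ)) :
    z ≤ 2*c*((n:ℝ)^(θ-1)*q^θ) := by
  have hnR : (1:ℝ) ≤ (n:ℝ) := by exact_mod_cast hn
  have hnpos : (0:ℝ) < (n:ℝ) := by linarith
  have hqθ : (0:ℝ) ≤ q ^ θ := Real.rpow_nonneg hq0.le _
  have hnθ : (0:ℝ) ≤ (n:ℝ) ^ (θ-1) := Real.rpow_nonneg hnpos.le _
  rcases le_total q (1/(n:ℝ)) with hcase | hcase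
  · have e1 : ((n:ℝ)^(θ-1) * q^θ) * (((n:ℝ)*q)^(2-θ)) = (n:ℝ) * q^2 := by
      rw [Real.mul_rpow hnpos.le hq0.le,
        show ((n:ℝ)^(θ-1) * q^θ) * ((n:ℝ)^(2-θ) * q^(2-θ))
          = ((n:ℝ)^(θ-1)*(n:ℝ)^(2-θ)) * (q^θ*q^(2-θ)) from by ring,
        ← Real.rpow_add hnpos, ← Real.rpow_add hq0,
        show (θ-1+(2-θ)) = (1:ℝ) from by ring, show (θ+(2-θ)) = (2:ℝ) from by ring,
        Real.rpow_one, show (2:ℝ) = ((2:ℕ):ℝ) from by norm_num, Real.rpow_natCast]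
    have hle1 : ((n:ℝ)*q)^(2-θ) ≤ 1 :=
      Real.rpow_le_one (by positivity)
        (by rw [le_div_iff₀ hnpos] at hcase; linarith [hcase]) (by linarith)
    have key : (n:ℝ) * q^2 ≤ (n:ℝ)^(θ-1) * q^θ := by
      calc (n:ℝ) * q^2 = ((n:ℝ)^(θ-1) * q^θ) * (((n:ℝ)*q)^(2-θ)) := e1.symm
      _ ≤ ((n:ℝ)^(θ-1) * q^θ) * 1 := by
          exact mul_le_mul_of_nonneg_left hle1 (by positivity)
      _ = (n:ℝ)^(θ-1) * q^θ := by ring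
    calc z ≤ c * ((n:ℝ) * q^2) := h1
    _ ≤ c * ((n:ℝ)^(θ-1) * q^θ) := mul_le_mul_of_nonneg_left key hc.le
    _ ≤ 2*c*((n:ℝ)^(θ-1)*q^θ) := by nlinarith [mul_nonneg hnθ hqθ]
  · have hq2 : (n:ℝ)⁻¹ ≤ q := by
      rw [one_div] at hcase; exact hcase
    have e2 : (n:ℝ)^(θ-1) * ((n:ℝ)⁻¹)^θ = (n:ℝ)⁻¹ := by
      rw [← Real.rpow_neg_one (n:ℝ), ← Real.rpow_mul hnpos.le, ← Real.rpow_add hnpos,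
        show (θ - 1 + -1 * θ) = (-1 : ℝ) from by ring, Real.rpow_neg_one]
    have h3 : ((n:ℝ)⁻¹)^θ ≤ q^θ := Real.rpow_le_rpow (by positivity) hq2 hθ0
    have h4 : (n:ℝ)⁻¹ ≤ (n:ℝ)^(θ-1) * q^θ := by
      rw [← e2]
      exact mul_le_mul_of_nonneg_left h3 hnθ
    calc z ≤ 2*c/(n:ℝ) := h2
    _ = 2*c * (n:ℝ)⁻¹ := by ring
    _ ≤ 2*c*((n:ℝ)^(θ-1)*q^θ) := by
        exact mul_le_mul_of_nonneg_left h4 (by positivity)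

lemma step_nonneg_and_bound (n : ℕ) (hn : 1 ≤ n) (q σ' σs θ : ℝ) (hq0 : 0 < q) (hq1 : q ≤ 1)
    (hσ : σ' ≤ σs) (hσs0 : 0 ≤ σs) (hσs : σs < 1) (hθ0 : 0 ≤ θ) (hθ1 : θ ≤ 1) :
    0 ≤ Ebin (n+1) q (gfun σ') - Ebin n q (gfun σ') ∧
    Ebin (n+1) q (gfun σ') - Ebin n q (gfun σ')
      ≤ (2/(1-σs)) * ((n:ℝ)^(θ-1) * q^θ) := by
  have h1σ : (0:ℝ) < 1 - σs := by linarith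
  have hnR : (1:ℝ) ≤ (n:ℝ) := by exact_mod_cast hn
  have h1q : (0:ℝ) ≤ 1 - q := by linarith
  rw [Ebin_succ_sub]
  set P : ℕ → ℝ := fun m => (n.choose m : ℝ) * q ^ m * (1-q) ^ (n-m) with hP
  have hPnn : ∀ m, 0 ≤ P m := by intro m; rw [hP]; positivity
  have hδnn : ∀ m : ℕ, 0 ≤ gfun σ' (m+1) - gfun σ' m := by
    intro m
    rcases Nat.eq_zero_or_pos m with h | h
    · subst h; rw [show (0:ℕ)+1 = 1 from rfl, gfun_one, gfun_zero]; norm_num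
    · rw [gfun_succ_sub σ' m h]
      have h2 : (1:ℝ) ≤ (m:ℝ) := by exact_mod_cast h
      have : (0:ℝ) < (m:ℝ) - σ' := by linarith
      positivity
  constructor
  · apply mul_nonneg hq0.le
    apply Finset.sum_nonneg
    intro m _
    exact mul_nonneg (hδnn m) (hPnn m)
  set S := ∑ m ∈ Finset.range (n+1), (gfun σ' (m+1) - gfun σ' m) * P m with hS
  have hpeel : S = ∑ m ∈ Finset.range n, (gfun σ' (m+1+1) - gfun σ' (m+1)) * P (m+1) := by
    rw [hS, Finset.sum_range_succ' _ n]
    rw [show (0:ℕ)+1 = 1 from rfl, gfun_one, gfun_zero]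
    simp
  -- Bound (A)
  have hPsplit : ∑ m ∈ Finset.range n, P (m+1) = 1 - (1-q)^n := by
    have h1 := binom_sum_one n q
    have h2 : ∑ m ∈ Finset.range (n+1), P m
        = (∑ m ∈ Finset.range n, P (m+1)) + P 0 := Finset.sum_range_succ' P n
    have h3 : P 0 = (1-q)^n := by rw [hP]; simp
    have h4 : ∑ m ∈ Finset.range (n+1), P m = 1 := by rw [hP] at *; exact h1
    rw [h2, h3] at h4
    linarith
  have hbern : 1 - (1-q)^n ≤ (n:ℝ) * q := by
    have := one_add_mul_le_pow (a := -q) (by linarith) n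
    have h5 : (1:ℝ) + (n:ℝ) * (-q) ≤ (1-q)^n := by
      simpa [sub_eq_add_neg] using this
    linarith
  have hA : S ≤ (1/(1-σs)) * ((n:ℝ)*q) := by
    rw [hpeel]
    have hterm : ∀ m ∈ Finset.range n,
        (gfun σ' (m+1+1) - gfun σ' (m+1)) * P (m+1) ≤ (1/(1-σs)) * P (m+1) := by
      intro m _
      apply mul_le_mul_of_nonneg_right _ (hPnn (m+1))
      rw [gfun_succ_sub σ' (m+1) (by omega)]
      have hm1 : (1:ℝ) ≤ ((m+1:ℕ):ℝ) := by exact_mod_cast Nat.one_le_iff_ne_zero.mpr (by omega)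
      have hge : (1:ℝ) - σs ≤ ((m+1:ℕ):ℝ) - σ' := by push_cast at hm1 ⊢; linarith
      exact one_div_le_one_div_of_le h1σ hge
    calc ∑ m ∈ Finset.range n, (gfun σ' (m+1+1) - gfun σ' (m+1)) * P (m+1)
        ≤ ∑ m ∈ Finset.range n, (1/(1-σs)) * P (m+1) := Finset.sum_le_sum hterm
    _ = (1/(1-σs)) * ∑ m ∈ Finset.range n, P (m+1) := by rw [Finset.mul_sum]
    _ = (1/(1-σs)) * (1 - (1-q)^n) := by rw [hPsplit]
    _ ≤ (1/(1-σs)) * ((n:ℝ)*q) := by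
        apply mul_le_mul_of_nonneg_left hbern (by positivity)
  -- Bound (B)
  set Q : ℕ → ℝ := fun i => ((n+1).choose i : ℝ) * q ^ i * (1-q) ^ ((n+1)-i) with hQ
  have hQnn : ∀ i, 0 ≤ Q i := by intro i; rw [hQ]; positivity
  have hQsum : ∑ m ∈ Finset.range n, Q (m+2) ≤ 1 := by
    have h1 : ∑ i ∈ Finset.range (n+2), Q i = 1 := by rw [hQ]; exact binom_sum_one (n+1) q
    have h2 : ∑ i ∈ Finset.range (n+2), Q i
        = (∑ i ∈ Finset.range (n+1), Q (i+1)) + Q 0 := Finset.sum_range_succ' Q (n+1)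
    have h3 : ∑ i ∈ Finset.range (n+1), Q (i+1)
        = (∑ i ∈ Finset.range n, Q (i+1+1)) + Q 1 := Finset.sum_range_succ' (fun i => Q (i+1)) n
    have h4 : ∀ i, Q (i+1+1) = Q (i+2) := fun i => rfl
    simp only [h4] at h3
    rw [h2, h3] at h1
    have := hQnn 0
    have := hQnn 1
    linarith
  have hB : q * S ≤ (2/(1-σs)) * (1/((n:ℝ)+1)) := by
    rw [hpeel, Finset.mul_sum]
    have hterm : ∀ m ∈ Finset.range n,
        q * ((gfun σ' (m+1+1) - gfun σ' (m+1)) * P (m+1))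
          ≤ (2/(1-σs)) * ((1/((n:ℝ)+1)) * Q (m+2)) := by
      intro m hm
      have hmn : m < n := Finset.mem_range.mp hm
      rw [gfun_succ_sub σ' (m+1) (by omega)]
      have hm1 : (1:ℝ) ≤ ((m+1:ℕ):ℝ) := by exact_mod_cast Nat.one_le_iff_ne_zero.mpr (by omega)
      have hpos : (0:ℝ) < ((m+1:ℕ):ℝ) - σ' := by push_cast at hm1 ⊢; linarith
      have hd : (1:ℝ)/(((m+1:ℕ):ℝ) - σ') ≤ (2/(1-σs)) * (1/((m:ℝ)+2)) := by
        rw [div_mul_div_comm, div_le_div_iff₀ hpos (by positivity)]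
        push_cast
        nlinarith
      have hid : (1/((m:ℝ)+2)) * (q * P (m+1))
          = (1/((n:ℝ)+1)) * Q (m+2) := by
        rw [hP, hQ]
        simp only []
        have hc : ((n:ℝ)+1) * ((n.choose (m+1) : ℝ)) = (((n+1).choose (m+2) : ℝ)) * ((m:ℝ)+2) := by
          have := Nat.add_one_mul_choose_eq n (m+1)
          exact_mod_cast this
        have he : (n+1) - (m+2) = n - (m+1) := by omega
        rw [he]
        have hq2 : q ^ (m+2) = q ^ (m+1) * q := by ring
        rw [hq2]
        field_simp
        linear_combination (1 - q) ^ (n - (m+1)) * hc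
      calc q * ((1/(((m+1:ℕ):ℝ) - σ')) * P (m+1))
          ≤ ((2/(1-σs)) * (1/((m:ℝ)+2))) * (q * P (m+1)) := by
            have hqP : 0 ≤ q * P (m+1) := mul_nonneg hq0.le (hPnn (m+1))
            have := mul_le_mul_of_nonneg_right hd hqP
            calc q * ((1/(((m+1:ℕ):ℝ) - σ')) * P (m+1))
                = (1/(((m+1:ℕ):ℝ) - σ')) * (q * P (m+1)) := by ring
            _ ≤ ((2/(1-σs)) * (1/((m:ℝ)+2))) * (q * P (m+1)) := this
      _ = (2/(1-σs)) * ((1/((m:ℝ)+2)) * (q * P (m+1))) := by ring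
      _ = (2/(1-σs)) * ((1/((n:ℝ)+1)) * Q (m+2)) := by rw [hid]
    calc ∑ m ∈ Finset.range n, q * ((gfun σ' (m+1+1) - gfun σ' (m+1)) * P (m+1))
        ≤ ∑ m ∈ Finset.range n, (2/(1-σs)) * ((1/((n:ℝ)+1)) * Q (m+2)) :=
          Finset.sum_le_sum hterm
    _ = (2/(1-σs)) * (1/((n:ℝ)+1)) * ∑ m ∈ Finset.range n, Q (m+2) := by
        rw [Finset.mul_sum]; apply Finset.sum_congr rfl; intros; ring
    _ ≤ (2/(1-σs)) * (1/((n:ℝ)+1)) * 1 := by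
        apply mul_le_mul_of_nonneg_left hQsum (by positivity)
    _ = (2/(1-σs)) * (1/((n:ℝ)+1)) := by ring
  -- combine with mix2
  have hc0 : (0:ℝ) < 1/(1-σs) := by positivity
  have h1' : q * S ≤ (1/(1-σs)) * ((n:ℝ) * q^2) := by
    have := mul_le_mul_of_nonneg_left hA hq0.le
    calc q * S ≤ q * ((1/(1-σs)) * ((n:ℝ)*q)) := this
    _ = (1/(1-σs)) * ((n:ℝ) * q^2) := by ring
  have h2' : q * S ≤ 2 * (1/(1-σs)) / (n:ℝ) := by
    have hnn : (0:ℝ) < (n:ℝ) := by linarith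
    have : (1:ℝ)/((n:ℝ)+1) ≤ 1/(n:ℝ) := one_div_le_one_div_of_le hnn (by linarith)
    calc q * S ≤ (2/(1-σs)) * (1/((n:ℝ)+1)) := hB
    _ ≤ (2/(1-σs)) * (1/(n:ℝ)) := mul_le_mul_of_nonneg_left this (by positivity)
    _ = 2 * (1/(1-σs)) / (n:ℝ) := by ring
  have := mix2 (q*S) q n (1/(1-σs)) θ hc0 hn hq0 hq1 hθ0 hθ1 h1' h2'
  calc q * S ≤ 2*(1/(1-σs))*((n:ℝ)^(θ-1)*q^θ) := this
  _ = (2/(1-σs)) * ((n:ℝ)^(θ-1) * q^θ) := by ring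


lemma pow_diff_bound (q : ℝ) (n kk : ℕ) (hq0 : 0 < q) (hq1 : q ≤ 1) (hnk : n ≤ kk) :
    0 ≤ (1-q)^n - (1-q)^kk ∧ (1-q)^n - (1-q)^kk ≤ ((kk:ℝ)-(n:ℝ)) * (q * (1-q)^n) := by
  have h1q0 : (0:ℝ) ≤ 1 - q := by linarith
  have h1q1 : (1:ℝ) - q ≤ 1 := by linarith
  constructor
  · have := pow_le_pow_of_le_one h1q0 h1q1 hnk
    linarith
  · have hsplit : (1-q)^kk = (1-q)^n * (1-q)^(kk-n) := by
      rw [← pow_add]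
      congr 1
      omega
    have hbern : 1 - (1-q)^(kk-n) ≤ ((kk-n:ℕ):ℝ) * q := by
      have := one_add_mul_le_pow (a := -q) (by linarith) (kk-n)
      have h5 : (1:ℝ) + ((kk-n:ℕ):ℝ) * (-q) ≤ (1-q)^(kk-n) := by
        simpa [sub_eq_add_neg] using this
      linarith
    have hcast : ((kk-n:ℕ):ℝ) = (kk:ℝ) - (n:ℝ) := by
      push_cast [Nat.cast_sub hnk]; ring
    rw [hsplit]
    have hpn : (0:ℝ) ≤ (1-q)^n := pow_nonneg h1q0 n
    calc (1-q)^n - (1-q)^n * (1-q)^(kk-n) = (1-q)^n * (1 - (1-q)^(kk-n)) := by ring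
    _ ≤ (1-q)^n * (((kk-n:ℕ):ℝ) * q) := mul_le_mul_of_nonneg_left hbern hpn
    _ = ((kk:ℝ)-(n:ℝ)) * (q * (1-q)^n) := by rw [hcast]; ring

lemma alpha0_chain_lower (p : ℕ → ℝ) (n0 : ℕ) (B : ℝ)
    (hd : ∀ n : ℕ, n0 ≤ n → B * alpha0 p (n : ℝ) ≤ alpha0 p ((2 * n : ℕ) : ℝ))
    (hB : 0 ≤ B) :
    ∀ k : ℕ, B ^ k * alpha0 p (n0 : ℝ) ≤ alpha0 p ((2 ^ k * n0 : ℕ) : ℝ) := by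
  intro k
  induction k with
  | zero => simp
  | succ k ih =>
    have h1 : n0 ≤ 2 ^ k * n0 := Nat.le_mul_of_pos_left n0 (by positivity)
    have h2 := hd (2 ^ k * n0) h1
    have h3 : (2 * (2 ^ k * n0) : ℕ) = (2 ^ (k + 1) * n0 : ℕ) := by ring
    rw [h3] at h2
    calc B ^ (k+1) * alpha0 p (n0 : ℝ) = B * (B ^ k * alpha0 p (n0:ℝ)) := by ring
    _ ≤ B * alpha0 p ((2 ^ k * n0 : ℕ) : ℝ) := mul_le_mul_of_nonneg_left ih hB
    _ ≤ alpha0 p ((2 ^ (k+1) * n0 : ℕ) : ℝ) := h2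


lemma conclude (p : ℕ → ℝ) (c1 aa θ : ℝ) (hc1 : 0 < c1) (n0 : ℕ)
    (hlow : ∀ n : ℕ, n0 ≤ n → c1 * (n:ℝ)^aa ≤ alpha0 p (n : ℝ))
    (F : ℕ → ℝ) (cst : ℝ)
    (hδ : θ - 1/2 - aa/2 < 0)
    (hbound : ∀ᶠ n : ℕ in atTop, 0 ≤ F n ∧ F n ≤ cst * (Real.sqrt (n:ℝ) * (n:ℝ)^(θ-1))) :
    Tendsto (fun n : ℕ => F n / Real.sqrt (alpha0 p (n : ℝ))) atTop (𝓝 0) := by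
  set δ : ℝ := 1/2 + aa/2 - θ with hδdef
  have hδ0 : 0 < δ := by rw [hδdef]; linarith
  have hK : Tendsto (fun n : ℕ => (cst/Real.sqrt c1) * (n:ℝ)^(-δ)) atTop (𝓝 0) := by
    have h1 : Tendsto (fun x : ℝ => x ^ (-δ)) atTop (𝓝 0) := tendsto_rpow_neg_atTop hδ0
    have h2 : Tendsto (fun n : ℕ => ((n:ℝ)) ^ (-δ)) atTop (𝓝 0) :=
      h1.comp tendsto_natCast_atTop_atTop
    have := h2.const_mul (cst/Real.sqrt c1)
    simpa using this
  apply tendsto_of_tendsto_of_tendsto_of_le_of_le' tendsto_const_nhds hK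
  · filter_upwards [hbound] with n hb
    exact div_nonneg hb.1 (Real.sqrt_nonneg _)
  · filter_upwards [hbound, eventually_ge_atTop n0, eventually_ge_atTop 1] with n hb hn0 hn1
    have hnR : (1:ℝ) ≤ (n:ℝ) := by exact_mod_cast hn1
    have hnpos : (0:ℝ) < (n:ℝ) := by linarith
    have hd1 : c1 * (n:ℝ)^aa ≤ alpha0 p (n : ℝ) := hlow n hn0
    have hdpos : 0 < c1 * (n:ℝ)^aa := mul_pos hc1 (Real.rpow_pos_of_pos hnpos aa)
    have hsq : Real.sqrt (c1 * (n:ℝ)^aa) ≤ Real.sqrt (alpha0 p (n : ℝ)) :=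
      Real.sqrt_le_sqrt hd1
    have hsqpos : 0 < Real.sqrt (c1 * (n:ℝ)^aa) := Real.sqrt_pos.mpr hdpos
    have key : cst * (Real.sqrt (n:ℝ) * (n:ℝ)^(θ-1)) / Real.sqrt (c1 * (n:ℝ)^aa)
        = (cst/Real.sqrt c1) * (n:ℝ)^(-δ) := by
      rw [Real.sqrt_mul hc1.le]
      have e1 : Real.sqrt ((n:ℝ)^aa) = (n:ℝ)^(aa/2) := by
        rw [Real.sqrt_eq_rpow, ← Real.rpow_mul hnpos.le]
        congr 1; ring
      have e2 : Real.sqrt (n:ℝ) = (n:ℝ)^((1:ℝ)/2) := Real.sqrt_eq_rpow _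
      rw [e1, e2]
      have e3 : (n:ℝ)^((1:ℝ)/2) * (n:ℝ)^(θ-1) / (n:ℝ)^(aa/2) = (n:ℝ)^(-δ) := by
        rw [← Real.rpow_add hnpos, ← Real.rpow_sub hnpos]
        congr 1; rw [hδdef]; ring
      have hsc1 : Real.sqrt c1 ≠ 0 := ne_of_gt (Real.sqrt_pos.mpr hc1)
      have hna : (n:ℝ)^(aa/2) ≠ 0 := ne_of_gt (Real.rpow_pos_of_pos hnpos _)
      field_simp
      rw [← e3]
      field_simp
    calc F n / Real.sqrt (alpha0 p (n : ℝ))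
        ≤ F n / Real.sqrt (c1 * (n:ℝ)^aa) :=
          div_le_div_of_nonneg_left hb.1 hsqpos hsq
    _ ≤ cst * (Real.sqrt (n:ℝ) * (n:ℝ)^(θ-1)) / Real.sqrt (c1 * (n:ℝ)^aa) :=
          (div_le_div_iff_of_pos_right hsqpos).mpr hb.2
    _ = (cst/Real.sqrt c1) * (n:ℝ)^(-δ) := key


/-- Lemma (de-Poissonization bounds): for independent `M_{n,j} ∼ Binomial(n, p_j)` and
`k_n ≥ n` with `k_n - n = O(√n)`, the increments of `∑_j E 1_{M_{n,j} ≥ 1}` and (under a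
second-order condition on `α`) of `∑_j E g_{σ_n}(M_{n,j})` are `o(α(n)^{1/2})`. -/
theorem binomial_increments_negligible
    (p : ℕ → ℝ) (hp : ∀ j, 0 < p j) (hpsum : HasSum p 1)
    (γ : ℝ) (hγ : γ ∈ Set.Ioo (0 : ℝ) 1)
    (hRV : RegularlyVarying (alpha0 p) γ)
    (σ : ℝ) (hσ : σ ∈ Set.Ioo (0 : ℝ) 1)
    (σn : ℕ → ℝ) (hσn : Tendsto σn atTop (𝓝 σ))
    (k : ℕ → ℕ) (hk1 : ∀ n, n ≤ k n)
    (hk2 : ∃ C : ℝ, ∀ n : ℕ, ((k n : ℝ) - (n : ℝ)) ≤ C * Real.sqrt (n : ℝ)) :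
    Tendsto
      (fun n : ℕ =>
        (∑' j : ℕ, ((1 - (1 - p j) ^ (k n)) - (1 - (1 - p j) ^ n))) /
          Real.sqrt (alpha0 p n))
      atTop (𝓝 0)
    ∧ (∀ (L : ℝ → ℝ) (C' β : ℝ), ContDiffOn ℝ 1 L (Set.Ici 1) → 0 < C' → β < γ →
        (∀ u : ℝ, 1 < u → |alpha0 p u - u ^ γ * L u| ≤ C' * u ^ β) →
        (∀ δ : ℝ, 0 < δ → ∃ Cδ : ℝ, 0 < Cδ ∧
          ∀ u : ℝ, 1 < u → |deriv L u| ≤ Cδ * u ^ (-1 + δ)) →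
        Tendsto
          (fun n : ℕ =>
            (∑' j : ℕ, (Ebin (k n) (p j) (gfun (σn n)) - Ebin n (p j) (gfun (σn n)))) /
              Real.sqrt (alpha0 p n))
          atTop (𝓝 0)) := by
  obtain ⟨hγ0, hγ1⟩ := hγ
  obtain ⟨hσ0, hσ1⟩ := hσ
  obtain ⟨Cb, hCb⟩ := hk2
  have hps : Summable p := hpsum.summable
  have hple : ∀ j, p j ≤ 1 := fun j => le_hasSum hpsum j (fun i _ => (hp i).le)
  have hmono : ∀ {u v : ℝ}, u ≤ v → alpha0 p u ≤ alpha0 p v :=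
    fun {u v} h => alpha0_mono p hp hps h
  have hcard := card_filter_le_alpha0 p hp hps
  -- exponents
  set ε : ℝ := γ*(1-γ)/8 with hεdef
  have hε0 : 0 < ε := by rw [hεdef]; nlinarith
  set aa : ℝ := γ - ε with haadef
  set b : ℝ := γ + ε with hbdef
  set θ : ℝ := γ + 2*ε with hθdef
  have haa0 : 0 < aa := by rw [haadef, hεdef]; nlinarith
  have hb1 : b < 1 := by rw [hbdef, hεdef]; nlinarith
  have hθ1 : θ < 1 := by rw [hθdef, hεdef]; nlinarith
  have hθ0 : 0 < θ := by rw [hθdef]; linarith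
  have hbθ : b < θ := by rw [hbdef, hθdef]; linarith
  have hb0 : 0 < b := by rw [hbdef]; linarith
  have hexp : θ - 1/2 - aa/2 < 0 := by
    rw [hθdef, haadef, hεdef]
    nlinarith [mul_pos (by linarith : (0:ℝ) < 1 - γ) (by linarith : (0:ℝ) < 8 - 5*γ)]
  -- doubling bounds from regular variation at u = 2
  have hup2 : (2:ℝ)^γ < (2:ℝ)^b := Real.rpow_lt_rpow_of_exponent_lt one_lt_two (by linarith)
  have hlo2 : (2:ℝ)^aa < (2:ℝ)^γ := Real.rpow_lt_rpow_of_exponent_lt one_lt_two (by linarith)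
  have hRV2 := hRV 2 two_pos
  have hev1 : ∀ᶠ n : ℕ in atTop, alpha0 p ((n:ℝ)*2) / alpha0 p (n:ℝ) < (2:ℝ)^b :=
    hRV2.eventually_lt_const hup2
  have hev2 : ∀ᶠ n : ℕ in atTop, (2:ℝ)^aa < alpha0 p ((n:ℝ)*2) / alpha0 p (n:ℝ) :=
    hRV2.eventually_const_lt hlo2
  have hevpos : ∀ᶠ n : ℕ in atTop, 1 ≤ alpha0 p (n:ℝ) := by
    filter_upwards [eventually_ge_atTop ⌈1/p 0⌉₊] with n hn
    apply one_le_alpha0 p hp hps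
    calc 1/p 0 ≤ (⌈1/p 0⌉₊:ℝ) := Nat.le_ceil _
    _ ≤ (n:ℝ) := by exact_mod_cast hn
  obtain ⟨m0, hm0⟩ := eventually_atTop.mp (hev1.and (hev2.and hevpos))
  set n1 : ℕ := m0 + 1 with hn1def
  have hn1ge : 1 ≤ n1 := by omega
  have hprops : ∀ n : ℕ, n1 ≤ n →
      alpha0 p ((n:ℝ)*2) / alpha0 p (n:ℝ) < (2:ℝ)^b ∧
      (2:ℝ)^aa < alpha0 p ((n:ℝ)*2) / alpha0 p (n:ℝ) ∧ 1 ≤ alpha0 p (n:ℝ) :=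
    fun n hn => hm0 n (by omega)
  have hdubU : ∀ n : ℕ, n1 ≤ n → alpha0 p ((2*n:ℕ):ℝ) ≤ (2:ℝ)^b * alpha0 p (n:ℝ) := by
    intro n hn
    obtain ⟨e1, _, e3⟩ := hprops n hn
    have hpos : 0 < alpha0 p (n:ℝ) := lt_of_lt_of_le one_pos e3
    have harg : ((2*n:ℕ):ℝ) = (n:ℝ)*2 := by push_cast; ring
    rw [harg]
    have := (div_lt_iff₀ hpos).mp e1
    linarith
  have hdubL : ∀ n : ℕ, n1 ≤ n → (2:ℝ)^aa * alpha0 p (n:ℝ) ≤ alpha0 p ((2*n:ℕ):ℝ) := by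
    intro n hn
    obtain ⟨_, e2, e3⟩ := hprops n hn
    have hpos : 0 < alpha0 p (n:ℝ) := lt_of_lt_of_le one_pos e3
    have harg : ((2*n:ℕ):ℝ) = (n:ℝ)*2 := by push_cast; ring
    rw [harg]
    have := (lt_div_iff₀ hpos).mp e2
    linarith
  have hone1 : 1 ≤ alpha0 p (n1:ℝ) := (hprops n1 le_rfl).2.2
  have hchainU := alpha0_chain_upper p n1 ((2:ℝ)^b) hdubU (Real.rpow_nonneg (by norm_num) b) hn1ge
  have hchainL := alpha0_chain_lower p n1 ((2:ℝ)^aa) hdubL (Real.rpow_nonneg (by norm_num) aa)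
  set C1 : ℝ := (2:ℝ)^b * alpha0 p (n1:ℝ) with hC1def
  have hC1nn : 0 ≤ C1 := mul_nonneg (Real.rpow_nonneg (by norm_num) b) (alpha0_nonneg p _)
  have hupper : ∀ u : ℝ, 1 ≤ u → alpha0 p u ≤ C1 * u ^ b :=
    alpha0_upper p (fun {u v} h => hmono h) n1 hn1ge b hb0.le hchainU
  have hchainL' : ∀ kk : ℕ, ((2:ℝ) ^ aa) ^ kk * alpha0 p (n1 : ℝ) ≤ alpha0 p ((2 ^ kk * n1 : ℕ) : ℝ) :=
    hchainL
  have hlower := alpha0_lower p (fun {u v} h => hmono h) n1 hn1ge aa haa0.le hone1 hchainL'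
  set c1 : ℝ := (2 * (n1:ℝ)) ^ (-aa) with hc1def
  have hc1pos : 0 < c1 := by
    rw [hc1def]
    apply Real.rpow_pos_of_pos
    have : (1:ℝ) ≤ (n1:ℝ) := by exact_mod_cast hn1ge
    linarith
  -- summability of p^θ
  obtain ⟨hsumθ, _⟩ := summable_rpow_of_count p hp hple C1 b θ hb0.le hbθ hC1nn hcard hupper
  set A : ℝ := ∑' j, p j ^ θ with hAdef
  have hA0 : 0 ≤ A := tsum_nonneg (fun j => Real.rpow_nonneg (hp j).le θ)
  have hCb0 : 0 ≤ Cb := by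
    have h := hCb 1
    have h2 : (1:ℝ) ≤ (k 1:ℝ) := by exact_mod_cast hk1 1
    rw [Nat.cast_one, Real.sqrt_one] at h
    linarith
  -- Part (a)
  have hkcast : ∀ n : ℕ, (0:ℝ) ≤ (k n:ℝ) - (n:ℝ) := by
    intro n
    have : (n:ℝ) ≤ (k n:ℝ) := by exact_mod_cast hk1 n
    linarith
  have hboundA : ∀ᶠ n : ℕ in atTop,
      0 ≤ (∑' j : ℕ, ((1 - (1 - p j) ^ (k n)) - (1 - (1 - p j) ^ n))) ∧
      (∑' j : ℕ, ((1 - (1 - p j) ^ (k n)) - (1 - (1 - p j) ^ n)))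
        ≤ (Cb*A) * (Real.sqrt (n:ℝ) * (n:ℝ)^(θ-1)) := by
    filter_upwards [eventually_ge_atTop 1] with n hn1'
    have hdb := fun j => pow_diff_bound (p j) n (k n) (hp j) (hple j) (hk1 n)
    have hd : ∀ j : ℕ, (1 - (1-p j)^(k n)) - (1 - (1-p j)^n)
        = (1-p j)^n - (1-p j)^(k n) := fun j => by ring
    set c2 : ℝ := Cb * Real.sqrt (n:ℝ) * (n:ℝ)^(θ-1) with hc2def
    have hc2nn : 0 ≤ c2 := by
      rw [hc2def]
      exact mul_nonneg (mul_nonneg hCb0 (Real.sqrt_nonneg _))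
        (Real.rpow_nonneg (Nat.cast_nonneg n) _)
    have hterm : ∀ j, (1-p j)^n - (1-p j)^(k n) ≤ c2 * p j ^ θ := by
      intro j
      have h1 := (hdb j).2
      have h2 : p j * (1-p j)^n ≤ (n:ℝ)^(θ-1) * p j^θ :=
        qpow_bound (p j) n θ (hp j) (hple j) hn1' hθ0.le hθ1.le
      have h3 : (k n:ℝ) - (n:ℝ) ≤ Cb*Real.sqrt (n:ℝ) := hCb n
      have h5 : 0 ≤ p j * (1-p j)^n :=
        mul_nonneg (hp j).le (pow_nonneg (by linarith [hple j]) n)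
      calc (1-p j)^n - (1-p j)^(k n) ≤ ((k n:ℝ)-(n:ℝ)) * (p j * (1-p j)^n) := h1
      _ ≤ (Cb*Real.sqrt (n:ℝ)) * ((n:ℝ)^(θ-1) * p j^θ) :=
          mul_le_mul h3 h2 h5 (le_trans (hkcast n) h3)
      _ = c2 * p j ^ θ := by rw [hc2def]; ring
    have hsummd : Summable (fun j => (1-p j)^n - (1-p j)^(k n)) :=
      Summable.of_nonneg_of_le (fun j => (hdb j).1) hterm (hsumθ.mul_left c2)
    constructor
    · apply tsum_nonneg
      intro j
      have := (hdb j).1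
      linarith [hd j]
    · have heq : (∑' j : ℕ, ((1 - (1 - p j) ^ (k n)) - (1 - (1 - p j) ^ n)))
          = ∑' j, ((1-p j)^n - (1-p j)^(k n)) := tsum_congr hd
      rw [heq]
      calc ∑' j, ((1-p j)^n - (1-p j)^(k n)) ≤ ∑' j, c2 * p j ^ θ :=
            hsummd.tsum_le_tsum hterm (hsumθ.mul_left c2)
      _ = c2 * A := by rw [tsum_mul_left]
      _ = (Cb*A) * (Real.sqrt (n:ℝ) * (n:ℝ)^(θ-1)) := by rw [hc2def]; ring
  refine ⟨conclude p c1 aa θ hc1pos n1 hlower _ (Cb*A) hexp hboundA, ?_⟩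
  -- Part (b)
  intro L C' β _ _ _ _ _
  set σs : ℝ := (1+σ)/2 with hσsdef
  have hσs0 : 0 ≤ σs := by rw [hσsdef]; linarith
  have hσs1 : σs < 1 := by rw [hσsdef]; linarith
  have hevσ : ∀ᶠ n : ℕ in atTop, σn n ≤ σs := hσn.eventually_le_const (by rw [hσsdef]; linarith)
  have hfac0 : (0:ℝ) < 2/(1-σs) := by
    apply div_pos (by norm_num)
    linarith
  have hboundB : ∀ᶠ n : ℕ in atTop,
      0 ≤ (∑' j : ℕ, (Ebin (k n) (p j) (gfun (σn n)) - Ebin n (p j) (gfun (σn n)))) ∧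
      (∑' j : ℕ, (Ebin (k n) (p j) (gfun (σn n)) - Ebin n (p j) (gfun (σn n))))
        ≤ ((2/(1-σs))*Cb*A) * (Real.sqrt (n:ℝ) * (n:ℝ)^(θ-1)) := by
    filter_upwards [eventually_ge_atTop 1, hevσ] with n hn1' hσn'
    have hnR : (1:ℝ) ≤ (n:ℝ) := by exact_mod_cast hn1'
    have htel : ∀ j : ℕ, Ebin (k n) (p j) (gfun (σn n)) - Ebin n (p j) (gfun (σn n))
        = ∑ m ∈ Finset.Ico n (k n),
            (Ebin (m+1) (p j) (gfun (σn n)) - Ebin m (p j) (gfun (σn n))) := by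
      intro j
      rw [Finset.sum_Ico_eq_sub _ (hk1 n),
        Finset.sum_range_sub (f := fun m => Ebin m (p j) (gfun (σn n))),
        Finset.sum_range_sub (f := fun m => Ebin m (p j) (gfun (σn n)))]
      ring
    have hstep : ∀ j : ℕ, ∀ m ∈ Finset.Ico n (k n),
        0 ≤ Ebin (m+1) (p j) (gfun (σn n)) - Ebin m (p j) (gfun (σn n)) ∧
        Ebin (m+1) (p j) (gfun (σn n)) - Ebin m (p j) (gfun (σn n))
          ≤ (2/(1-σs)) * ((n:ℝ)^(θ-1) * p j ^ θ) := by
      intro j m hm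
      obtain ⟨hm1, _⟩ := Finset.mem_Ico.mp hm
      have h := step_nonneg_and_bound m (le_trans hn1' hm1) (p j) (σn n) σs θ
        (hp j) (hple j) hσn' hσs0 hσs1 hθ0.le hθ1.le
      refine ⟨h.1, le_trans h.2 ?_⟩
      have hmn : (n:ℝ) ≤ (m:ℝ) := by exact_mod_cast hm1
      have hnpos : (0:ℝ) < (n:ℝ) := by linarith
      have hr : (m:ℝ)^(θ-1) ≤ (n:ℝ)^(θ-1) :=
        Real.rpow_le_rpow_of_nonpos hnpos hmn (by linarith)
      have hqθ : (0:ℝ) ≤ p j ^ θ := Real.rpow_nonneg (hp j).le θ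
      exact mul_le_mul_of_nonneg_left
        (mul_le_mul_of_nonneg_right hr hqθ) hfac0.le
    set c3 : ℝ := (2/(1-σs)) * Cb * Real.sqrt (n:ℝ) * (n:ℝ)^(θ-1) with hc3def
    have hc3nn : 0 ≤ c3 := by
      rw [hc3def]
      exact mul_nonneg (mul_nonneg (mul_nonneg hfac0.le hCb0) (Real.sqrt_nonneg _))
        (Real.rpow_nonneg (Nat.cast_nonneg n) _)
    have hdnn : ∀ j : ℕ, 0 ≤ Ebin (k n) (p j) (gfun (σn n)) - Ebin n (p j) (gfun (σn n)) := by
      intro j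
      rw [htel j]
      exact Finset.sum_nonneg (fun m hm => (hstep j m hm).1)
    have hdle : ∀ j : ℕ, Ebin (k n) (p j) (gfun (σn n)) - Ebin n (p j) (gfun (σn n))
        ≤ c3 * p j ^ θ := by
      intro j
      rw [htel j]
      have hcard2 : ((Finset.Ico n (k n)).card : ℝ) = (k n:ℝ) - (n:ℝ) := by
        rw [Nat.card_Ico]
        exact_mod_cast Nat.cast_sub (hk1 n)
      calc ∑ m ∈ Finset.Ico n (k n),
            (Ebin (m+1) (p j) (gfun (σn n)) - Ebin m (p j) (gfun (σn n)))
          ≤ ∑ _m ∈ Finset.Ico n (k n), (2/(1-σs)) * ((n:ℝ)^(θ-1) * p j ^ θ) :=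
            Finset.sum_le_sum (fun m hm => (hstep j m hm).2)
      _ = ((Finset.Ico n (k n)).card : ℝ) * ((2/(1-σs)) * ((n:ℝ)^(θ-1) * p j ^ θ)) := by
            rw [Finset.sum_const, nsmul_eq_mul]
      _ = ((k n:ℝ) - (n:ℝ)) * ((2/(1-σs)) * ((n:ℝ)^(θ-1) * p j ^ θ)) := by rw [hcard2]
      _ ≤ (Cb*Real.sqrt (n:ℝ)) * ((2/(1-σs)) * ((n:ℝ)^(θ-1) * p j ^ θ)) := by
            apply mul_le_mul_of_nonneg_right (hCb n)
            have hqθ : (0:ℝ) ≤ p j ^ θ := Real.rpow_nonneg (hp j).le θ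
            have : (0:ℝ) ≤ (n:ℝ)^(θ-1) := Real.rpow_nonneg (Nat.cast_nonneg n) _
            positivity
      _ = c3 * p j ^ θ := by rw [hc3def]; ring
    have hsummd : Summable (fun j => Ebin (k n) (p j) (gfun (σn n)) - Ebin n (p j) (gfun (σn n))) :=
      Summable.of_nonneg_of_le hdnn hdle (hsumθ.mul_left c3)
    constructor
    · exact tsum_nonneg hdnn
    · calc (∑' j : ℕ, (Ebin (k n) (p j) (gfun (σn n)) - Ebin n (p j) (gfun (σn n))))
          ≤ ∑' j, c3 * p j ^ θ := hsummd.tsum_le_tsum hdle (hsumθ.mul_left c3)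
      _ = c3 * A := by rw [tsum_mul_left]
      _ = ((2/(1-σs))*Cb*A) * (Real.sqrt (n:ℝ) * (n:ℝ)^(θ-1)) := by rw [hc3def]; ring
  exact conclude p c1 aa θ hc1pos n1 hlower _ ((2/(1-σs))*Cb*A) hexp hboundB


end
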